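/- Under the genericity assumptions, for every i = 0, 1, …, g the points V_i and V_i′ lie on the tropical curve Γ̃; that is, F is not differentiable at any of the 2g+2 points V_0,…,V_g, V_0′,…,V_g′. -/

import Mathlib

/-- The tropical polynomial
`F(X,Y) = min(2Y, Y + min((g+1)X, C_g + gX, …, C_1 + X, C_0), C_{-1})`. -/
noncomputable def tropF (g : ℕ) (Cm1 : ℝ) (C : ℕ → ℝ) (P : ℝ × ℝ) : ℝ :=
  min (2 * P.2)
    (min
      (P.2 + min (((g : ℝ) + 1) * P.1)
        ((Finset.range (g + 1)).inf' ⟨0, Finset.mem_range.mpr (Nat.succ_pos g)⟩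
          (fun i => C i + (i : ℝ) * P.1)))
      Cm1)

private lemma aux_mono (g : ℕ) (C : ℕ → ℝ)
    (hd : ∀ k, k + 1 ≤ g → C (k + 1) - C (k + 2) ≤ C k - C (k + 1)) :
    ∀ a b, a ≤ b → b ≤ g → C b - C (b + 1) ≤ C a - C (a + 1) := by
  intro a b hab
  induction b, hab using Nat.le_induction with
  | base => exact fun _ => le_rfl
  | succ b hab ih =>
    intro hbg
    exact le_trans (hd b hbg) (ih (by omega))

private lemma aux_tmin (g : ℕ) (C : ℕ → ℝ) (j : ℕ) (hj : j ≤ g)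
    (hd : ∀ k, k + 1 ≤ g → C (k + 1) - C (k + 2) ≤ C k - C (k + 1)) :
    ∀ k ≤ g + 1, C j + (j : ℝ) * (C j - C (j + 1)) ≤ C k + (k : ℝ) * (C j - C (j + 1)) := by
  have mono := aux_mono g C hd
  have down : ∀ k n : ℕ, k ≤ n → n ≤ j →
      C n + (n : ℝ) * (C j - C (j + 1)) ≤ C k + (k : ℝ) * (C j - C (j + 1)) := by
    intro k n hkn
    induction n, hkn using Nat.le_induction with
    | base => exact fun _ => le_rfl
    | succ n hkn ih =>
      intro hnj
      have h1 : C j - C (j + 1) ≤ C n - C (n + 1) := mono n j (by omega) hj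
      have h2 : C (n + 1) + ((n + 1 : ℕ) : ℝ) * (C j - C (j + 1)) ≤
          C n + (n : ℝ) * (C j - C (j + 1)) := by push_cast; nlinarith
      exact le_trans h2 (ih (by omega))
  have up : ∀ n : ℕ, j ≤ n → n ≤ g + 1 →
      C j + (j : ℝ) * (C j - C (j + 1)) ≤ C n + (n : ℝ) * (C j - C (j + 1)) := by
    intro n hjn
    induction n, hjn using Nat.le_induction with
    | base => exact fun _ => le_rfl
    | succ n hjn ih =>
      intro hng
      have h1 : C n - C (n + 1) ≤ C j - C (j + 1) := mono j n hjn (by omega)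
      have h2 : C n + (n : ℝ) * (C j - C (j + 1)) ≤
          C (n + 1) + ((n + 1 : ℕ) : ℝ) * (C j - C (j + 1)) := by push_cast; nlinarith
      exact le_trans (ih (by omega)) h2
  intro k hk
  rcases le_total k j with h | h
  · exact down k j h le_rfl
  · exact up k h hk

private lemma not_diff_aux (φ : ℝ → ℝ) (y₀ A B : ℝ)
    (h : ∀ᶠ y in nhds y₀, |y - y₀| = A + B * y - 2 * φ y) :
    ¬ DifferentiableAt ℝ φ y₀ := by
  intro hφ
  have h1 : DifferentiableAt ℝ (fun y => A + B * y - 2 * φ y) y₀ := by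
    apply DifferentiableAt.sub
    · exact (differentiableAt_const A).add ((differentiableAt_const B).mul differentiableAt_id)
    · exact (differentiableAt_const 2).mul hφ
  have h2 : DifferentiableAt ℝ (fun y => |y - y₀|) y₀ := h1.congr_of_eventuallyEq h
  have h2' : DifferentiableAt ℝ (fun y => |y - y₀|) (0 + y₀) := by rwa [zero_add]
  have h3 : DifferentiableAt ℝ (fun y : ℝ => |y|) 0 := by
    have h4 := h2'.comp (0 : ℝ) (differentiableAt_id.add_const y₀)
    have he : ((fun y => |y - y₀|) ∘ fun y : ℝ => id y + y₀) = fun y : ℝ => |y| := by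
      funext y; simp
    rwa [he] at h4
  exact not_differentiableAt_abs_zero h3

private lemma eventually_near (y₀ ε : ℝ) (hε : 0 < ε) :
    ∀ᶠ y in nhds y₀, |y - y₀| < ε := by
  have : Metric.ball y₀ ε ∈ nhds y₀ := Metric.ball_mem_nhds _ hε
  exact Filter.eventually_of_mem this fun y hy => by
    simpa [Real.dist_eq] using hy

private lemma main_aux (g : ℕ) (Cm1 : ℝ) (C : ℕ → ℝ) (j : ℕ)
    (hmin : min (((g : ℝ) + 1) * (C j - C (j + 1)))
        ((Finset.range (g + 1)).inf' ⟨0, Finset.mem_range.mpr (Nat.succ_pos g)⟩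
          (fun i => C i + (i : ℝ) * (C j - C (j + 1))))
        = C j + (j : ℝ) * (C j - C (j + 1)))
    (hCm : 2 * (C j + (j : ℝ) * (C j - C (j + 1))) < Cm1) :
    ¬ DifferentiableAt ℝ (tropF g Cm1 C)
        (C j - C (j + 1), Cm1 - ((j + 1 : ℕ) : ℝ) * C j + (j : ℝ) * C (j + 1)) ∧
    ¬ DifferentiableAt ℝ (tropF g Cm1 C)
        (C j - C (j + 1), ((j + 1 : ℕ) : ℝ) * C j - (j : ℝ) * C (j + 1)) := by
  set x : ℝ := C j - C (j + 1) with hxdef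
  set c : ℝ := C j + (j : ℝ) * x with hcdef
  have hφ : ∀ y : ℝ, tropF g Cm1 C (x, y) = min (2 * y) (min (y + c) Cm1) := by
    intro y
    unfold tropF
    dsimp only
    rw [hmin]
  constructor
  · -- upper vertex, y₀ = Cm1 - c
    intro hF
    have hy0 : Cm1 - ((j + 1 : ℕ) : ℝ) * C j + (j : ℝ) * C (j + 1) = Cm1 - c := by
      rw [hcdef, hxdef]; push_cast; ring
    have hdiff : DifferentiableAt ℝ (fun y => tropF g Cm1 C (x, y))
        (Cm1 - ((j + 1 : ℕ) : ℝ) * C j + (j : ℝ) * C (j + 1)) :=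
      hF.comp _ (DifferentiableAt.prodMk (differentiableAt_const x) differentiableAt_id)
    rw [hy0] at hdiff
    refine not_diff_aux (fun y => tropF g Cm1 C (x, y)) (Cm1 - c) (c + Cm1) 1 ?_ hdiff
    have hev := eventually_near (Cm1 - c) ((Cm1 - 2 * c) / 2) (by linarith)
    refine hev.mono fun y hy => ?_
    simp only [hφ]
    rcases le_total y (Cm1 - c) with h | h
    · have hc1 : c ≤ y := by
        have : (Cm1 - c) - y < (Cm1 - 2 * c) / 2 := by
          calc (Cm1 - c) - y ≤ |y - (Cm1 - c)| := by
                rw [abs_sub_comm]; exact le_abs_self _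
            _ < _ := hy
        linarith
      rw [min_eq_left (by linarith : y + c ≤ Cm1), min_eq_right (by linarith : y + c ≤ 2 * y),
        abs_of_nonpos (by linarith)]
      ring
    · have h2y : Cm1 ≤ 2 * y := by linarith
      rw [min_eq_right (by linarith : Cm1 ≤ y + c), min_eq_right h2y,
        abs_of_nonneg (by linarith)]
      ring
  · -- lower vertex, y₀ = c
    intro hF
    have hy0 : ((j + 1 : ℕ) : ℝ) * C j - (j : ℝ) * C (j + 1) = c := by
      rw [hcdef, hxdef]; push_cast; ring
    have hdiff : DifferentiableAt ℝ (fun y => tropF g Cm1 C (x, y))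
        (((j + 1 : ℕ) : ℝ) * C j - (j : ℝ) * C (j + 1)) :=
      hF.comp _ (DifferentiableAt.prodMk (differentiableAt_const x) differentiableAt_id)
    rw [hy0] at hdiff
    refine not_diff_aux (fun y => tropF g Cm1 C (x, y)) c c 3 ?_ hdiff
    have hev := eventually_near c (Cm1 - 2 * c) (by linarith)
    refine hev.mono fun y hy => ?_
    simp only [hφ]
    rcases le_total y c with h | h
    · rw [min_eq_left (by linarith : y + c ≤ Cm1), min_eq_left (by linarith : 2 * y ≤ y + c),
        abs_of_nonpos (by linarith)]
      ring
    · have hyc : y - c < Cm1 - 2 * c := by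
        calc y - c ≤ |y - c| := le_abs_self _
          _ < _ := hy
      rw [min_eq_left (by linarith : y + c ≤ Cm1), min_eq_right (by linarith : y + c ≤ 2 * y),
        abs_of_nonneg (by linarith)]
      ring

/-- Under the genericity assumptions, all `2g+2` vertices
`V_i = (C_{g-i} - C_{g-i+1}, C_{-1} - (g-i+1)C_{g-i} + (g-i)C_{g-i+1})` and
`V_i' = (C_{g-i} - C_{g-i+1}, (g-i+1)C_{g-i} - (g-i)C_{g-i+1})`, `i = 0, …, g`
(with the convention `C_{g+1} = 0`), lie on the tropical curve `Γ̃`, i.e. `F`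
is not differentiable at any of them. -/
theorem tropF_vertices_on_curve (g : ℕ) (hg : 1 ≤ g) (Cm1 : ℝ) (C : ℕ → ℝ)
    (hCtop : C (g + 1) = 0)
    (h1 : Cm1 > 2 * C 0) (h2 : C (g - 1) > 2 * C g)
    (h3 : ∀ i, i + 2 ≤ g → C i + C (i + 2) > 2 * C (i + 1)) :
    ∀ i ≤ g,
      ¬ DifferentiableAt ℝ (tropF g Cm1 C)
        (C (g - i) - C (g - i + 1),
          Cm1 - ((g - i + 1 : ℕ) : ℝ) * C (g - i) + ((g - i : ℕ) : ℝ) * C (g - i + 1)) ∧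
      ¬ DifferentiableAt ℝ (tropF g Cm1 C)
        (C (g - i) - C (g - i + 1),
          ((g - i + 1 : ℕ) : ℝ) * C (g - i) - ((g - i : ℕ) : ℝ) * C (g - i + 1)) := by
  intro i hi
  have hd : ∀ k, k + 1 ≤ g → C (k + 1) - C (k + 2) ≤ C k - C (k + 1) := by
    intro k hk
    rcases eq_or_lt_of_le hk with h | h
    · have e2 : k + 2 = g + 1 := by omega
      have e1 : g - 1 = k := by omega
      rw [e1] at h2
      rw [← h] at h2
      rw [e2, hCtop]
      linarith
    · have := h3 k (by omega)
      linarith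
  set j := g - i with hjdef
  have hjg : j ≤ g := Nat.sub_le g i
  have tmin := aux_tmin g C j hjg hd
  have hc0 : C j + (j : ℝ) * (C j - C (j + 1)) ≤ C 0 := by
    have := tmin 0 (by omega)
    simpa using this
  have hmin : min (((g : ℝ) + 1) * (C j - C (j + 1)))
      ((Finset.range (g + 1)).inf' ⟨0, Finset.mem_range.mpr (Nat.succ_pos g)⟩
        (fun i => C i + (i : ℝ) * (C j - C (j + 1))))
      = C j + (j : ℝ) * (C j - C (j + 1)) := by
    apply le_antisymm
    · refine le_trans (min_le_right _ _) ?_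
      exact Finset.inf'_le _ (Finset.mem_range.mpr (by omega : j < g + 1))
    · apply le_min
      · have h := tmin (g + 1) le_rfl
        rw [hCtop] at h
        push_cast at h ⊢
        linarith
      · apply Finset.le_inf'
        intro k hk
        have hk' := Finset.mem_range.mp hk
        exact tmin k (by omega)
  exact main_aux g Cm1 C j hmin (by linarith)
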